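/- Let Ω̂ be a real symmetric positive semidefinite n×n matrix with rank(Ω̂) = r < n, let Δ ∈ D_+^n be such that there exists Λ ∈ S_0^n with ‖Δ + Λ‖ < σ_r(Ω̂) and range(Δ + Λ) orthogonal to range(Ω̂), and suppose Σ := Ω̂ + Δ is positive definite. Then Ω̂ solves the reformulated Frisch–Kalman problem: Ω̂ is feasible (rank(Ω̂) ≤ r, Ω̂ positive semidefinite, Σ − Ω̂ positive semidefinite and diagonal), and for every real n×n matrix Ω with rank(Ω) ≤ r, Ω positive semidefinite, Σ − Ω positive semidefinite and Σ − Ω diagonal, one has ‖Σ − Ω‖_F² ≥ ‖Σ − Ω̂‖_F² = ‖Δ‖_F². -/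

import Mathlib

open Matrix

/-- The `k`-th largest singular value (1-indexed) of a real square matrix,
with junk value `0` when `k` is out of range. -/
noncomputable def sv {n : ℕ} (A : Matrix (Fin n) (Fin n) ℝ) (k : ℕ) : ℝ :=
  if h : k - 1 < n then
    (fun i => Real.sqrt ((show (Aᵀ * A).IsHermitian by
          rw [IsHermitian, conjTranspose_eq_transpose_of_trivial, transpose_mul, transpose_transpose]).eigenvalues i))
      (Tuple.sort (fun i : Fin n =>
        Real.sqrt ((show (Aᵀ * A).IsHermitian by
          rw [IsHermitian, conjTranspose_eq_transpose_of_trivial, transpose_mul, transpose_transpose]).eigenvalues i))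
        (Fin.rev ⟨k - 1, h⟩))
  else 0

/-- Operator (spectral) norm: the largest singular value. -/
noncomputable def opNorm {n : ℕ} (A : Matrix (Fin n) (Fin n) ℝ) : ℝ := sv A 1

/-- Frobenius norm. -/
noncomputable def frobNorm {n : ℕ} (A : Matrix (Fin n) (Fin n) ℝ) : ℝ :=
  Real.sqrt (∑ i, ∑ j, (A i j) ^ 2)

/-- The `r`-norm: square root of the sum of squares of the `r` largest singular values. -/
noncomputable def rNorm {n : ℕ} (A : Matrix (Fin n) (Fin n) ℝ) (r : ℕ) : ℝ :=
  Real.sqrt (∑ k ∈ Finset.range r, (sv A (k + 1)) ^ 2)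

/-- Frobenius (trace) inner product of square matrices. -/
noncomputable def minner {n : ℕ} (A B : Matrix (Fin n) (Fin n) ℝ) : ℝ :=
  (Aᵀ * B).trace

/-- The ranges (column spaces) of `A` and `B` are orthogonal. -/
def rangesOrth {n : ℕ} (A B : Matrix (Fin n) (Fin n) ℝ) : Prop :=
  ∀ x y : Fin n → ℝ, (A.mulVec x) ⬝ᵥ (B.mulVec y) = 0

lemma Matrix.isHermitian_transpose_mul_self {n : ℕ} (A : Matrix (Fin n) (Fin n) ℝ) :
    (Aᵀ * A).IsHermitian := by
  rw [IsHermitian, conjTranspose_eq_transpose_of_trivial, transpose_mul, transpose_transpose]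

open scoped MatrixOrder in
lemma Matrix.posSemidef_iff_eq_transpose_mul_self {n : ℕ} {A : Matrix (Fin n) (Fin n) ℝ} :
    A.PosSemidef ↔ ∃ B : Matrix (Fin n) (Fin n) ℝ, A = Bᴴ * B := by
  constructor
  · intro hA
    obtain ⟨B, hB⟩ := CStarAlgebra.nonneg_iff_eq_star_mul_self.mp hA.nonneg
    exact ⟨B, hB⟩
  · rintro ⟨B, rfl⟩
    exact posSemidef_conjTranspose_mul_self B

variable {n : ℕ}

lemma trace_transpose_mul_self_eq (X : Matrix (Fin n) (Fin n) ℝ) :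
    (Xᵀ * X).trace = ∑ i, ∑ j, (X i j)^2 := by
  simp only [Matrix.trace, Matrix.diag, Matrix.mul_apply, Matrix.transpose_apply, sq]
  exact Finset.sum_comm

lemma psd_trace_nonneg {A : Matrix (Fin n) (Fin n) ℝ} (hA : A.PosSemidef) : 0 ≤ A.trace := by
  obtain ⟨B, rfl⟩ := Matrix.posSemidef_iff_eq_transpose_mul_self.mp hA
  rw [Matrix.conjTranspose_eq_transpose_of_trivial, trace_transpose_mul_self_eq]
  positivity

lemma trace_mul_psd_nonneg {A B : Matrix (Fin n) (Fin n) ℝ} (hA : A.PosSemidef)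
    (hB : B.PosSemidef) : 0 ≤ (A * B).trace := by
  obtain ⟨C, rfl⟩ := Matrix.posSemidef_iff_eq_transpose_mul_self.mp hA
  rw [show (Cᴴ * C * B).trace = (C * B * Cᴴ).trace from (Matrix.trace_mul_cycle C B Cᴴ).symm]
  exact psd_trace_nonneg (hB.mul_mul_conjTranspose_same C)

variable {n : ℕ}

lemma conj_mul_conj (U D1 D2 : Matrix (Fin n) (Fin n) ℝ) (h : star U * U = 1) :
    (U * D1 * star U) * (U * D2 * star U) = U * (D1 * D2) * star U := by
  simp only [Matrix.mul_assoc]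
  rw [← Matrix.mul_assoc (star U) U (D2 * star U), h, Matrix.one_mul]

lemma conj_psd (U : Matrix (Fin n) (Fin n) ℝ) (d : Fin n → ℝ) (hd : ∀ i, 0 ≤ d i) :
    (U * Matrix.diagonal d * star U).PosSemidef := by
  rw [Matrix.star_eq_conjTranspose]
  exact (Matrix.posSemidef_diagonal_iff.mpr hd).mul_mul_conjTranspose_same U

lemma conj_trace (U D : Matrix (Fin n) (Fin n) ℝ) (h : star U * U = 1) :
    (U * D * star U).trace = D.trace := by
  rw [Matrix.trace_mul_cycle, h, Matrix.one_mul]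

lemma one_sub_conj (U D : Matrix (Fin n) (Fin n) ℝ) (h : U * star U = 1) :
    1 - U * D * star U = U * (1 - D) * star U := by
  rw [Matrix.mul_sub, Matrix.sub_mul, Matrix.mul_one, h]

lemma conj_transpose_self (U D : Matrix (Fin n) (Fin n) ℝ) (hD : Dᵀ = D) :
    (U * D * star U)ᵀ = U * D * star U := by
  rw [Matrix.star_eq_conjTranspose, Matrix.conjTranspose_eq_transpose_of_trivial,
    Matrix.transpose_mul, Matrix.transpose_mul, Matrix.transpose_transpose, hD,
    Matrix.mul_assoc]

lemma real_spectral {A : Matrix (Fin n) (Fin n) ℝ} (hA : A.IsHermitian) :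
    A = (hA.eigenvectorUnitary : Matrix (Fin n) (Fin n) ℝ) * Matrix.diagonal hA.eigenvalues
      * star (hA.eigenvectorUnitary : Matrix (Fin n) (Fin n) ℝ) := by
  have := hA.spectral_theorem
  rwa [RCLike.ofReal_real_eq_id, Function.id_comp] at this

lemma master {A : Matrix (Fin n) (Fin n) ℝ} (hA : A.PosSemidef) (σ : ℝ) (hσ : 0 ≤ σ)
    (hlb : ∀ i, hA.1.eigenvalues i ≠ 0 → σ ≤ hA.1.eigenvalues i) :
    ∃ P : Matrix (Fin n) (Fin n) ℝ, Pᵀ = P ∧ P * P = P ∧ P * A = A ∧ A * P = A ∧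
      P.PosSemidef ∧ (1 - P).PosSemidef ∧ P.trace = (A.rank : ℝ) ∧
      (A - σ • P).PosSemidef ∧ ∃ G, P = A * G := by
  classical
  set lam := hA.1.eigenvalues with hlam
  set U : Matrix (Fin n) (Fin n) ℝ := (hA.1.eigenvectorUnitary : Matrix (Fin n) (Fin n) ℝ)
    with hUdef
  have hU1 : star U * U = 1 := Matrix.mem_unitaryGroup_iff'.mp hA.1.eigenvectorUnitary.2
  have hU2 : U * star U = 1 := Matrix.mem_unitaryGroup_iff.mp hA.1.eigenvectorUnitary.2
  have hspec : A = U * Matrix.diagonal lam * star U := real_spectral hA.1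
  set d : Fin n → ℝ := fun i => if lam i = 0 then 0 else 1 with hd
  have hdd : (fun i => d i * d i) = d := by
    funext i; by_cases h : lam i = 0 <;> simp [hd, h]
  have hdl : (fun i => d i * lam i) = lam := by
    funext i; by_cases h : lam i = 0 <;> simp [hd, h]
  have hld : (fun i => lam i * d i) = lam := by
    funext i; by_cases h : lam i = 0 <;> simp [hd, h]
  refine ⟨U * Matrix.diagonal d * star U, ?_, ?_, ?_, ?_, ?_, ?_, ?_, ?_, ?_⟩
  · exact conj_transpose_self U _ (Matrix.diagonal_transpose d)
  · rw [conj_mul_conj U _ _ hU1, Matrix.diagonal_mul_diagonal, hdd]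
  · conv_lhs => rw [hspec]
    rw [conj_mul_conj U _ _ hU1, Matrix.diagonal_mul_diagonal, hdl]
    exact hspec.symm
  · conv_lhs => rw [hspec]
    rw [conj_mul_conj U _ _ hU1, Matrix.diagonal_mul_diagonal, hld]
    exact hspec.symm
  · exact conj_psd U d (fun i => by by_cases h : lam i = 0 <;> simp [hd, h])
  · rw [one_sub_conj U _ hU2, show (1 : Matrix (Fin n) (Fin n) ℝ) - Matrix.diagonal d
      = Matrix.diagonal (fun i => 1 - d i) by rw [← Matrix.diagonal_one, Matrix.diagonal_sub]]
    exact conj_psd U _ (fun i => by by_cases h : lam i = 0 <;> simp [hd, h])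
  · rw [conj_trace U _ hU1, Matrix.trace_diagonal, hA.1.rank_eq_card_non_zero_eigs,
      Fintype.card_subtype, Finset.card_filter]
    push_cast
    refine Finset.sum_congr rfl (fun i _ => ?_)
    simp only [← hlam]
    by_cases h : lam i = 0 <;> simp [hd, h]
  · have key : A - σ • (U * Matrix.diagonal d * star U)
        = U * Matrix.diagonal (fun i => lam i - σ * d i) * star U := by
      conv_lhs => rw [hspec]
      rw [← Matrix.smul_mul, ← Matrix.mul_smul, ← Matrix.sub_mul, ← Matrix.mul_sub,
        ← Matrix.diagonal_smul, ← Matrix.diagonal_sub]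
      rfl
    rw [key]
    refine conj_psd U _ (fun i => ?_)
    by_cases h : lam i = 0
    · simp [hd, h]
    · simpa [hd, h] using hlb i h
  · refine ⟨U * Matrix.diagonal (fun i => if lam i = 0 then 0 else (lam i)⁻¹) * star U, ?_⟩
    conv_rhs => rw [hspec]
    rw [conj_mul_conj U _ _ hU1, Matrix.diagonal_mul_diagonal]
    have heq : (fun i => lam i * (if lam i = 0 then 0 else (lam i)⁻¹)) = d := by
      funext i; by_cases h : lam i = 0 <;> simp [hd, h, mul_inv_cancel₀]
    rw [heq]


lemma sv_nonneg (A : Matrix (Fin n) (Fin n) ℝ) (k : ℕ) : 0 ≤ sv A k := by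
  unfold sv
  split
  · exact Real.sqrt_nonneg _
  · exact le_refl 0

lemma eig_le_sv_one_sq (hn : 0 < n) (A : Matrix (Fin n) (Fin n) ℝ) (i : Fin n) :
    (Matrix.isHermitian_transpose_mul_self A).eigenvalues i ≤ (sv A 1) ^ 2 := by
  set e := (Matrix.isHermitian_transpose_mul_self A).eigenvalues with he
  set f : Fin n → ℝ := fun i => Real.sqrt (e i) with hf
  have h0 : (1:ℕ) - 1 < n := by omega
  have hsv : sv A 1 = f (Tuple.sort f (Fin.rev ⟨1 - 1, h0⟩)) := by
    unfold sv
    rw [dif_pos h0]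
  have hrev : Fin.rev (⟨1 - 1, h0⟩ : Fin n) = ⟨n - 1, by omega⟩ := by
    ext
    simp [Fin.val_rev]
  have hmono := Tuple.monotone_sort f
  have hfi : f i ≤ sv A 1 := by
    rw [hsv, hrev]
    have : i = Tuple.sort f ((Tuple.sort f).symm i) := (Equiv.apply_symm_apply _ _).symm
    rw [this]
    exact hmono (by
      show ((Tuple.sort f).symm i : Fin n).val ≤ n - 1
      omega)
  have hei : 0 ≤ e i := Matrix.eigenvalues_conjTranspose_mul_self_nonneg A i
  calc e i = (f i) ^ 2 := by rw [hf]; simp [Real.sq_sqrt hei]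
  _ ≤ (sv A 1) ^ 2 := by
      apply pow_le_pow_left₀ (Real.sqrt_nonneg _) hfi

lemma card_sv_ge (A : Matrix (Fin n) (Fin n) ℝ) (r : ℕ) (hr1 : 1 ≤ r) (hrn : r ≤ n) :
    r ≤ (Finset.univ.filter (fun i => (sv A r) ^ 2 ≤
      (Matrix.isHermitian_transpose_mul_self A).eigenvalues i)).card := by
  classical
  set e := (Matrix.isHermitian_transpose_mul_self A).eigenvalues with he
  set f : Fin n → ℝ := fun i => Real.sqrt (e i) with hf
  have hr : r - 1 < n := by omega
  have hsv : sv A r = f (Tuple.sort f (Fin.rev ⟨r - 1, hr⟩)) := by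
    unfold sv
    rw [dif_pos hr]
  have hmono := Tuple.monotone_sort f
  have hmap : ∀ k : Fin r, Tuple.sort f (Fin.rev (Fin.castLE hrn k)) ∈
      Finset.univ.filter (fun i => (sv A r) ^ 2 ≤ e i) := by
    intro k
    simp only [Finset.mem_filter, Finset.mem_univ, true_and]
    have h1 : sv A r ≤ f (Tuple.sort f (Fin.rev (Fin.castLE hrn k))) := by
      rw [hsv]
      exact hmono (by
        show n - (r - 1 + 1) ≤ n - ((Fin.castLE hrn k : Fin n).val + 1)
        have : (k : ℕ) < r := k.2
        simp only [Fin.coe_castLE]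
        omega)
    set j := Tuple.sort f (Fin.rev (Fin.castLE hrn k)) with hj
    have h2 : 0 ≤ e j := Matrix.eigenvalues_conjTranspose_mul_self_nonneg A j
    calc (sv A r) ^ 2 ≤ (f j) ^ 2 := pow_le_pow_left₀ (sv_nonneg A r) h1 2
    _ = e j := by rw [hf]; simp [Real.sq_sqrt h2]
  have hinj : Function.Injective (fun k : Fin r => Tuple.sort f (Fin.rev (Fin.castLE hrn k))) := by
    intro a b hab
    simp only at hab
    have := (Tuple.sort f).injective hab
    have := Fin.rev_injective this
    exact Fin.castLE_injective hrn this
  calc r = (Finset.univ : Finset (Fin r)).card := by simp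
  _ ≤ _ := Finset.card_le_card_of_injOn _ (fun k _ => hmap k) (Function.Injective.injOn hinj)

lemma eig_lb {n r : ℕ} {Ωh : Matrix (Fin n) (Fin n) ℝ} (hΩ : Ωh.PosSemidef)
    (hrank : Ωh.rank = r) (hrn : r < n) (hσpos : 0 < sv Ωh r) :
    ∀ i, hΩ.1.eigenvalues i ≠ 0 → sv Ωh r ≤ hΩ.1.eigenvalues i := by
  classical
  set σ := sv Ωh r with hσdef
  by_contra hcon
  push_neg at hcon
  obtain ⟨i₀, hne, hlt⟩ := hcon
  set lam := hΩ.1.eigenvalues with hlam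
  have hr1 : 1 ≤ r := by
    rw [← hrank, hΩ.1.rank_eq_card_non_zero_eigs]
    exact Fintype.card_pos_iff.mpr ⟨⟨i₀, hne⟩⟩
  set U : Matrix (Fin n) (Fin n) ℝ := (hΩ.1.eigenvectorUnitary : Matrix (Fin n) (Fin n) ℝ)
    with hU
  have hU1 : star U * U = 1 := Matrix.mem_unitaryGroup_iff'.mp hΩ.1.eigenvectorUnitary.2
  have hU2 : U * star U = 1 := Matrix.mem_unitaryGroup_iff.mp hΩ.1.eigenvectorUnitary.2
  have hspec : Ωh = U * Matrix.diagonal lam * star U := real_spectral hΩ.1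
  set e := (Matrix.isHermitian_transpose_mul_self Ωh).eigenvalues with he
  set V : Matrix (Fin n) (Fin n) ℝ :=
    ((Matrix.isHermitian_transpose_mul_self Ωh).eigenvectorUnitary :
      Matrix (Fin n) (Fin n) ℝ) with hV
  have hV1 : star V * V = 1 :=
    Matrix.mem_unitaryGroup_iff'.mp (Matrix.isHermitian_transpose_mul_self Ωh).eigenvectorUnitary.2
  have hV2 : V * star V = 1 :=
    Matrix.mem_unitaryGroup_iff.mp (Matrix.isHermitian_transpose_mul_self Ωh).eigenvectorUnitary.2
  have hspecB : Ωhᴴ * Ωh = V * Matrix.diagonal e * star V :=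
    real_spectral (Matrix.isHermitian_transpose_mul_self Ωh)
  have hBU : Ωhᴴ * Ωh = U * Matrix.diagonal (fun i => lam i * lam i) * star U := by
    conv_lhs => rw [hΩ.1, hspec]
    rw [conj_mul_conj U _ _ hU1, Matrix.diagonal_mul_diagonal]
  set ds : Fin n → ℝ := fun i => if lam i < σ then 1 else 0 with hds
  set db : Fin n → ℝ := fun i => if σ ^ 2 ≤ e i then 1 else 0 with hdb
  set Ps := U * Matrix.diagonal ds * star U with hPs
  set Pb := V * Matrix.diagonal db * star V with hPb
  have hPs1 : (1 - Ps).PosSemidef := by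
    rw [hPs, one_sub_conj U _ hU2, show (1 : Matrix (Fin n) (Fin n) ℝ) - Matrix.diagonal ds
      = Matrix.diagonal (fun i => 1 - ds i) by rw [← Matrix.diagonal_one, Matrix.diagonal_sub]]
    exact conj_psd U _ (fun i => by by_cases h : lam i < σ <;> simp [hds, h])
  have hPb1 : (1 - Pb).PosSemidef := by
    rw [hPb, one_sub_conj V _ hV2, show (1 : Matrix (Fin n) (Fin n) ℝ) - Matrix.diagonal db
      = Matrix.diagonal (fun i => 1 - db i) by rw [← Matrix.diagonal_one, Matrix.diagonal_sub]]
    exact conj_psd V _ (fun i => by by_cases h : σ^2 ≤ e i <;> simp [hdb, h])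
  have hPsPs : Ps * Ps = Ps := by
    rw [hPs, conj_mul_conj U _ _ hU1, Matrix.diagonal_mul_diagonal]
    have : (fun i => ds i * ds i) = ds := by
      funext i; by_cases h : lam i < σ <;> simp [hds, h]
    rw [this]
  set F := Finset.univ.filter (fun i => lam i < σ) with hF
  set Z := Finset.univ.filter (fun i => lam i = 0) with hZ
  have htrPs : Ps.trace = (F.card : ℝ) := by
    rw [hPs, conj_trace U _ hU1, Matrix.trace_diagonal, hF, Finset.card_filter]
    push_cast
    refine Finset.sum_congr rfl (fun i _ => ?_)
    by_cases h : lam i < σ <;> simp [hds, h]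
  have htrPb : Pb.trace = ((Finset.univ.filter (fun i => σ^2 ≤ e i)).card : ℝ) := by
    rw [hPb, conj_trace V _ hV1, Matrix.trace_diagonal, Finset.card_filter]
    push_cast
    refine Finset.sum_congr rfl (fun i _ => ?_)
    by_cases h : σ^2 ≤ e i <;> simp [hdb, h]
  have htrPb_ge : (r : ℝ) ≤ Pb.trace := by
    rw [htrPb]
    exact_mod_cast card_sv_ge Ωh r hr1 (le_of_lt hrn)
  have hcardZ : Z.card = n - r := by
    have h1 : (Finset.univ.filter (fun i => ¬ lam i = 0)).card = r := by
      rw [← hrank, hΩ.1.rank_eq_card_non_zero_eigs, Fintype.card_subtype]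
    have h2 := Finset.card_filter_add_card_filter_not
      (s := (Finset.univ : Finset (Fin n))) (p := fun i => lam i = 0)
    rw [Finset.card_univ, Fintype.card_fin] at h2
    rw [hZ]
    omega
  have hZF : insert i₀ Z ⊆ F := by
    intro x hx
    rcases Finset.mem_insert.mp hx with h | h
    · subst h
      simp only [hF, Finset.mem_filter, Finset.mem_univ, true_and]
      exact hlt
    · simp only [hZ, Finset.mem_filter, Finset.mem_univ, true_and] at h
      simp only [hF, Finset.mem_filter, Finset.mem_univ, true_and, h]
      exact hσpos
  have hi₀Z : i₀ ∉ Z := by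
    simp only [hZ, Finset.mem_filter, Finset.mem_univ, true_and]
    exact hne
  have hcardF : n - r + 1 ≤ F.card := by
    have h3 : (insert i₀ Z).card = Z.card + 1 := Finset.card_insert_of_notMem hi₀Z
    have h4 := Finset.card_le_card hZF
    omega
  have key1 : Ps.trace + Pb.trace - (n : ℝ) ≤ (Ps * Pb).trace := by
    have h0 := trace_mul_psd_nonneg hPs1 hPb1
    have hexp : (1 - Ps) * (1 - Pb) = 1 - Ps - Pb + Ps * Pb := by noncomm_ring
    rw [hexp] at h0
    simp only [Matrix.trace_add, Matrix.trace_sub, Matrix.trace_one] at h0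
    simp only [Fintype.card_fin] at h0
    linarith
  have hBpsd2 : (Ωhᴴ * Ωh - σ^2 • Pb).PosSemidef := by
    have heq : Ωhᴴ * Ωh - σ^2 • Pb = V * Matrix.diagonal (fun i => e i - σ^2 * db i) * star V := by
      conv_lhs => rw [hspecB]
      rw [hPb, ← Matrix.smul_mul, ← Matrix.mul_smul, ← Matrix.sub_mul, ← Matrix.mul_sub,
        ← Matrix.diagonal_smul, ← Matrix.diagonal_sub]
      rfl
    rw [heq]
    refine conj_psd V _ (fun i => ?_)
    by_cases h : σ^2 ≤ e i
    · simp only [hdb, if_pos h, mul_one, sub_nonneg]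
      exact h
    · simpa [hdb, h] using Matrix.eigenvalues_conjTranspose_mul_self_nonneg Ωh i
  have hPsH : Psᴴ = Ps := by
    rw [Matrix.conjTranspose_eq_transpose_of_trivial]
    exact conj_transpose_self U _ (Matrix.diagonal_transpose ds)
  have key2 : 0 ≤ (Ps * (Ωhᴴ * Ωh - σ^2 • Pb) * Ps).trace := by
    have h5 := hBpsd2.mul_mul_conjTranspose_same Ps
    rw [hPsH] at h5
    exact psd_trace_nonneg h5
  have e1 : (Ps * (Ωhᴴ * Ωh) * Ps).trace = ∑ i ∈ F, (lam i)^2 := by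
    rw [hBU, hPs, conj_mul_conj U _ _ hU1, conj_mul_conj U _ _ hU1, conj_trace U _ hU1]
    simp only [Matrix.diagonal_mul_diagonal, Matrix.trace_diagonal]
    rw [hF, Finset.sum_filter]
    refine Finset.sum_congr rfl (fun i _ => ?_)
    by_cases h : lam i < σ <;> simp [hds, h, sq]
  have e2 : (Ps * Pb * Ps).trace = (Ps * Pb).trace := by
    rw [Matrix.trace_mul_comm (Ps * Pb) Ps, ← Matrix.mul_assoc, hPsPs]
  have key2' : σ^2 * (Ps * Pb).trace ≤ ∑ i ∈ F, (lam i)^2 := by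
    have hexp2 : Ps * (Ωhᴴ * Ωh - σ^2 • Pb) * Ps
        = Ps * (Ωhᴴ * Ωh) * Ps - σ^2 • (Ps * Pb * Ps) := by
      rw [Matrix.mul_sub, Matrix.sub_mul, Matrix.mul_smul, Matrix.smul_mul]
    rw [hexp2, Matrix.trace_sub, Matrix.trace_smul, e1, e2] at key2
    simp only [smul_eq_mul] at key2
    linarith
  have hsum_eq : ∑ i ∈ F, (lam i)^2 = ∑ i ∈ F \ Z, (lam i)^2 := by
    refine (Finset.sum_subset (Finset.sdiff_subset) (fun x hxF hxn => ?_)).symm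
    have : x ∈ Z := by
      by_contra hxZ
      exact hxn (Finset.mem_sdiff.mpr ⟨hxF, hxZ⟩)
    simp only [hZ, Finset.mem_filter] at this
    simp [this.2]
  have hi₀FZ : i₀ ∈ F \ Z :=
    Finset.mem_sdiff.mpr ⟨hZF (Finset.mem_insert_self i₀ Z), hi₀Z⟩
  have hsum_lt : ∑ i ∈ F \ Z, (lam i)^2 < ((F \ Z).card : ℝ) * σ^2 := by
    have := Finset.sum_lt_sum_of_nonempty ⟨i₀, hi₀FZ⟩ (f := fun i => (lam i)^2)
      (g := fun _ => σ^2) ?_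
    · simpa [Finset.sum_const, nsmul_eq_mul] using this
    · intro i hi
      have hiF := (Finset.mem_sdiff.mp hi).1
      have hiZ := (Finset.mem_sdiff.mp hi).2
      simp only [hF, Finset.mem_filter, Finset.mem_univ, true_and] at hiF
      simp only [hZ, Finset.mem_filter, Finset.mem_univ, true_and] at hiZ
      have hnn : 0 ≤ lam i := hΩ.eigenvalues_nonneg i
      exact pow_lt_pow_left₀ hiF hnn (by norm_num)
  have hcardFZ : (F \ Z).card = F.card - (n - r) := by
    rw [Finset.card_sdiff_of_subset ((Finset.subset_insert i₀ Z).trans hZF), hcardZ]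
  have hfinal : σ^2 * ((F.card : ℝ) + r - n) ≤ σ^2 * (Ps * Pb).trace := by
    apply mul_le_mul_of_nonneg_left _ (sq_nonneg σ)
    rw [htrPs] at key1
    linarith
  have hcast : ((F \ Z).card : ℝ) = (F.card : ℝ) - ((n : ℝ) - r) := by
    rw [hcardFZ]
    have : n - r ≤ F.card := by omega
    push_cast [Nat.cast_sub this, Nat.cast_sub (le_of_lt hrn)]
    ring
  have hσ2 : 0 < σ^2 := pow_pos hσpos 2
  rw [hcast] at hsum_lt
  nlinarith [hfinal, key2', hsum_eq, hsum_lt]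

lemma dot_mulVec_self {n : ℕ} (A : Matrix (Fin n) (Fin n) ℝ) (v : Fin n → ℝ) :
    (A *ᵥ v) ⬝ᵥ (A *ᵥ v) = v ⬝ᵥ ((Aᵀ * A) *ᵥ v) := by
  rw [← Matrix.mulVec_mulVec, Matrix.dotProduct_mulVec v, Matrix.vecMul_transpose]

lemma quad_bound {n : ℕ} (hn : 0 < n) (M : Matrix (Fin n) (Fin n) ℝ) (v : Fin n → ℝ) :
    v ⬝ᵥ M *ᵥ v ≤ opNorm M * (v ⬝ᵥ v) := by
  classical
  set c := opNorm M with hc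
  have hc0 : 0 ≤ c := sv_nonneg M 1
  set e := (Matrix.isHermitian_transpose_mul_self M).eigenvalues with he
  set V : Matrix (Fin n) (Fin n) ℝ :=
    ((Matrix.isHermitian_transpose_mul_self M).eigenvectorUnitary :
      Matrix (Fin n) (Fin n) ℝ) with hV
  have hV2 : V * star V = 1 :=
    Matrix.mem_unitaryGroup_iff.mp (Matrix.isHermitian_transpose_mul_self M).eigenvectorUnitary.2
  have hspecB : Mᴴ * M = V * Matrix.diagonal e * star V :=
    real_spectral (Matrix.isHermitian_transpose_mul_self M)
  have hstarV : star V = Vᵀ := by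
    rw [Matrix.star_eq_conjTranspose, Matrix.conjTranspose_eq_transpose_of_trivial]
  set u := star V *ᵥ v with hu
  have huu : u ⬝ᵥ u = v ⬝ᵥ v := by
    rw [hu, hstarV, dot_mulVec_self, Matrix.transpose_transpose, ← hstarV, hV2,
      Matrix.one_mulVec]
  have heig : ∀ i, e i ≤ c ^ 2 := fun i => eig_le_sv_one_sq hn M i
  have hMv : (M *ᵥ v) ⬝ᵥ (M *ᵥ v) = ∑ i, e i * (u i) ^ 2 := by
    have h1 : (M *ᵥ v) ⬝ᵥ (M *ᵥ v) = v ⬝ᵥ ((Mᴴ * M) *ᵥ v) := by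
      rw [Matrix.conjTranspose_eq_transpose_of_trivial]
      exact dot_mulVec_self M v
    rw [h1, hspecB, ← Matrix.mulVec_mulVec, ← Matrix.mulVec_mulVec,
      Matrix.dotProduct_mulVec v, show v ᵥ* V = Vᵀ *ᵥ v from
        (Matrix.vecMul_transpose Vᵀ v ▸ by rw [Matrix.transpose_transpose]),
      ← hstarV, ← hu]
    simp only [dotProduct]
    refine Finset.sum_congr rfl (fun i _ => ?_)
    rw [Matrix.mulVec_diagonal]
    ring
  have hMvle : (M *ᵥ v) ⬝ᵥ (M *ᵥ v) ≤ c ^ 2 * (v ⬝ᵥ v) := by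
    rw [hMv, ← huu]
    have : ∀ i ∈ Finset.univ, e i * (u i) ^ 2 ≤ c ^ 2 * (u i) ^ 2 := fun i _ =>
      mul_le_mul_of_nonneg_right (heig i) (sq_nonneg _)
    calc ∑ i, e i * (u i) ^ 2 ≤ ∑ i, c ^ 2 * (u i) ^ 2 := Finset.sum_le_sum this
    _ = c ^ 2 * (u ⬝ᵥ u) := by simp [dotProduct, Finset.mul_sum, sq]
  have hCS : (v ⬝ᵥ (M *ᵥ v)) ^ 2 ≤ (v ⬝ᵥ v) * ((M *ᵥ v) ⬝ᵥ (M *ᵥ v)) := by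
    have := Finset.sum_mul_sq_le_sq_mul_sq Finset.univ v (M *ᵥ v)
    simpa [dotProduct, sq] using this
  have hvv : 0 ≤ v ⬝ᵥ v :=
    Finset.sum_nonneg (fun i _ => mul_self_nonneg (v i))
  have h1 : (v ⬝ᵥ M *ᵥ v) ^ 2 ≤ (c * (v ⬝ᵥ v)) ^ 2 := by
    nlinarith [hCS, mul_le_mul_of_nonneg_left hMvle hvv]
  rcases le_or_gt (v ⬝ᵥ M *ᵥ v) 0 with h | h
  · exact h.trans (mul_nonneg hc0 hvv)
  · nlinarith [h1, mul_nonneg hc0 hvv]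

lemma psd_transpose_eq {n : ℕ} {A : Matrix (Fin n) (Fin n) ℝ} (hA : A.PosSemidef) : Aᵀ = A := by
  have h : Aᴴ = A := hA.1
  rwa [Matrix.conjTranspose_eq_transpose_of_trivial] at h

lemma diag_BMBt {n : ℕ} (B M : Matrix (Fin n) (Fin n) ℝ) (i : Fin n) :
    (B * M * Bᵀ) i i = (B i) ⬝ᵥ (M *ᵥ (B i)) := by
  simp only [Matrix.mul_apply, Matrix.transpose_apply, dotProduct, Matrix.mulVec,
    Finset.sum_mul, Finset.mul_sum]
  rw [Finset.sum_comm]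
  refine Finset.sum_congr rfl (fun j _ => Finset.sum_congr rfl (fun k _ => by ring))

lemma trace_mul_le_of_quad {n : ℕ} (M X : Matrix (Fin n) (Fin n) ℝ) (c : ℝ)
    (hq : ∀ v : Fin n → ℝ, v ⬝ᵥ M *ᵥ v ≤ c * (v ⬝ᵥ v)) (hX : X.PosSemidef) :
    (M * X).trace ≤ c * X.trace := by
  obtain ⟨B, hB⟩ := Matrix.posSemidef_iff_eq_transpose_mul_self.mp hX
  have hBt : Bᴴ = Bᵀ := Matrix.conjTranspose_eq_transpose_of_trivial B
  have h1 : (M * X).trace = (B * M * Bᵀ).trace := by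
    rw [hB, hBt, ← Matrix.mul_assoc, Matrix.trace_mul_cycle]
  have h2 : X.trace = ∑ i, (B i) ⬝ᵥ (B i) := by
    rw [hB, hBt, trace_transpose_mul_self_eq]
    refine Finset.sum_congr rfl (fun i _ => ?_)
    simp [dotProduct, sq]
  rw [h1, h2, Finset.mul_sum]
  rw [show (B * M * Bᵀ).trace = ∑ i, (B i) ⬝ᵥ (M *ᵥ (B i)) from
    Finset.sum_congr rfl (fun i _ => diag_BMBt B M i)]
  exact Finset.sum_le_sum (fun i _ => hq (B i))

lemma central {n r : ℕ} (hrn : r < n) (Ωh Ω M : Matrix (Fin n) (Fin n) ℝ)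
    (hΩ : Ωh.PosSemidef) (hrank : Ωh.rank = r)
    (hMsym : Mᵀ = M) (hMΩh : M * Ωh = 0)
    (hnorm : opNorm M < sv Ωh r)
    (hΩpsd : Ω.PosSemidef) (hΩrank : Ω.rank ≤ r) :
    2 * (M * Ω).trace ≤ ((Ωh - Ω) * (Ωh - Ω)).trace := by
  classical
  have hn : 0 < n := lt_of_le_of_lt (Nat.zero_le r) hrn
  set σ := sv Ωh r with hσdef
  have hσpos : 0 < σ := lt_of_le_of_lt (sv_nonneg M 1) hnorm
  have hlb := eig_lb hΩ hrank hrn hσpos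
  obtain ⟨P, hPt, hPP, hPA, hAP, hPpsd, hP1psd, hPtr, hRpsd, G, hPG⟩ :=
    master hΩ σ hσpos.le hlb
  obtain ⟨W, hWt, hWW, hWA, hAW, hWpsd, hW1psd, hWtr, -, -⟩ :=
    master hΩpsd 0 le_rfl (fun i _ => hΩpsd.eigenvalues_nonneg i)
  rw [hrank] at hPtr
  set Q : Matrix (Fin n) (Fin n) ℝ := 1 - W with hQ
  have hQt : Qᵀ = Q := by rw [hQ, Matrix.transpose_sub, Matrix.transpose_one, hWt]
  have hQQ : Q * Q = Q := by
    rw [hQ, Matrix.mul_sub, Matrix.sub_mul, Matrix.sub_mul, hWW]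
    simp only [Matrix.one_mul, Matrix.mul_one]
    abel
  have hQΩ : Q * Ω = 0 := by rw [hQ, Matrix.sub_mul, Matrix.one_mul, hWA, sub_self]
  have hΩQ : Ω * Q = 0 := by rw [hQ, Matrix.mul_sub, Matrix.mul_one, hAW, sub_self]
  have hQtr : Q.trace = (n : ℝ) - (Ω.rank : ℝ) := by
    rw [hQ, Matrix.trace_sub, Matrix.trace_one, hWtr]
    simp [Fintype.card_fin]
  have hMP : M * P = 0 := by rw [hPG, ← Matrix.mul_assoc, hMΩh, Matrix.zero_mul]
  have hPM : P * M = 0 := by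
    have h := congrArg Matrix.transpose hMP
    rwa [Matrix.transpose_mul, hPt, hMsym, Matrix.transpose_zero] at h
  have hΩht : Ωhᵀ = Ωh := psd_transpose_eq hΩ
  have hΩt : Ωᵀ = Ω := psd_transpose_eq hΩpsd
  -- the compressed matrix Ω' = (1-P) Ω (1-P)
  set Ω' : Matrix (Fin n) (Fin n) ℝ := (1 - P) * Ω * (1 - P) with hΩ'
  have hP1t : (1 - P)ᴴ = 1 - P := by
    rw [Matrix.conjTranspose_eq_transpose_of_trivial, Matrix.transpose_sub,
      Matrix.transpose_one, hPt]
  have hΩ'psd : Ω'.PosSemidef := by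
    have h := hΩpsd.mul_mul_conjTranspose_same (1 - P)
    rwa [hP1t] at h
  have htrMΩ' : (M * Ω).trace = (M * Ω').trace := by
    rw [hΩ']
    have hexp : (1 - P) * Ω * (1 - P) = Ω - P * Ω - Ω * P + P * Ω * P := by
      simp only [Matrix.sub_mul, Matrix.mul_sub, Matrix.one_mul, Matrix.mul_one]
      abel
    rw [hexp]
    simp only [Matrix.mul_add, Matrix.mul_sub, Matrix.trace_add, Matrix.trace_sub]
    have e1 : M * (P * Ω) = 0 := by rw [← Matrix.mul_assoc, hMP, Matrix.zero_mul]
    have e2 : (M * (Ω * P)).trace = 0 := by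
      rw [Matrix.trace_mul_comm, Matrix.mul_assoc, hPM, Matrix.mul_zero, Matrix.trace_zero]
    have e3 : M * (P * Ω * P) = 0 := by
      rw [show P * Ω * P = P * (Ω * P) from Matrix.mul_assoc P Ω P, ← Matrix.mul_assoc,
        hMP, Matrix.zero_mul]
    rw [e1, e3, e2]
    simp
  have hquad : ∀ v : Fin n → ℝ, v ⬝ᵥ M *ᵥ v ≤ opNorm M * (v ⬝ᵥ v) := quad_bound hn M
  have hkey1 : (M * Ω).trace ≤ σ * Ω'.trace := by
    rw [htrMΩ']
    calc (M * Ω').trace ≤ opNorm M * Ω'.trace := trace_mul_le_of_quad M Ω' _ hquad hΩ'psd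
    _ ≤ σ * Ω'.trace := by
        apply mul_le_mul_of_nonneg_right (le_of_lt hnorm) (psd_trace_nonneg hΩ'psd)
  -- R and S₀
  set R : Matrix (Fin n) (Fin n) ℝ := Ωh - σ • P with hR
  set S : Matrix (Fin n) (Fin n) ℝ := Ω - R with hS
  have hSt : Sᵀ = S := by
    rw [hS, hR, Matrix.transpose_sub, Matrix.transpose_sub, Matrix.transpose_smul, hΩt,
      hΩht, hPt]
  -- (†) : tr(S*S) - 2σ tr S + σ² r ≥ 0
  have hdagger : 0 ≤ (S * S).trace - 2 * σ * S.trace + σ ^ 2 * (r : ℝ) := by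
    set X : Matrix (Fin n) (Fin n) ℝ := S - σ • 1 with hX
    have hXt : Xᵀ = X := by
      rw [hX, Matrix.transpose_sub, Matrix.transpose_smul, Matrix.transpose_one, hSt]
    have hXXpsd : (X * X).PosSemidef := by
      have h := Matrix.posSemidef_conjTranspose_mul_self X
      rwa [Matrix.conjTranspose_eq_transpose_of_trivial, hXt] at h
    have ha : (X * X * Q).trace ≤ (X * X).trace := by
      have h1Q : ((1 : Matrix (Fin n) (Fin n) ℝ) - Q).PosSemidef := by
        rw [hQ, sub_sub_cancel]
        exact hWpsd
      have h0 : 0 ≤ (X * X * (1 - Q)).trace := trace_mul_psd_nonneg hXXpsd h1Q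
      have : (X * X * Q).trace + (X * X * (1 - Q)).trace = (X * X).trace := by
        rw [← Matrix.trace_add, ← Matrix.mul_add]
        simp
      linarith
    have hXQ : X * Q = -((R + σ • 1) * Q) := by
      rw [hX, hS, Matrix.sub_mul, Matrix.sub_mul, hΩQ, Matrix.add_mul]
      simp only [zero_sub, Matrix.smul_mul, Matrix.one_mul]
      module
    have hQX : Q * X = -(Q * (R + σ • 1)) := by
      have h := congrArg Matrix.transpose hXQ
      rwa [Matrix.transpose_mul, hQt, hXt, Matrix.transpose_neg, Matrix.transpose_mul, hQt,
        Matrix.transpose_add, Matrix.transpose_smul, Matrix.transpose_one,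
        show Rᵀ = R by rw [hR, Matrix.transpose_sub, Matrix.transpose_smul, hΩht, hPt]] at h
    have hRt : Rᵀ = R := by
      rw [hR, Matrix.transpose_sub, Matrix.transpose_smul, hΩht, hPt]
    have hb : σ ^ 2 * ((n : ℝ) - (Ω.rank : ℝ)) ≤ (X * X * Q).trace := by
      have h2 : (X * X * Q) * Q = X * X * Q := by rw [Matrix.mul_assoc (X * X) Q Q, hQQ]
      have hcyc : (X * X * Q).trace = ((Q * X) * (X * Q)).trace := by
        conv_lhs => rw [← h2]
        rw [Matrix.trace_mul_comm (X * X * Q) Q]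
        simp only [Matrix.mul_assoc]
      have hexpY : (R + σ • (1 : Matrix (Fin n) (Fin n) ℝ)) * (R + σ • 1)
          = R * R + (2 * σ) • R + (σ * σ) • (1 : Matrix (Fin n) (Fin n) ℝ) := by
        simp only [Matrix.add_mul, Matrix.mul_add, Matrix.smul_mul, Matrix.mul_smul,
          Matrix.mul_one, Matrix.one_mul, smul_smul]
        module
      have hprod : (Q * X) * (X * Q)
          = Q * ((R * R) * Q) + (2 * σ) • (Q * (R * Q)) + (σ * σ) • Q := by
        rw [hQX, hXQ, neg_mul_neg, show (Q * (R + σ • 1)) * ((R + σ • 1) * Q)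
            = Q * (((R + σ • 1) * (R + σ • 1)) * Q) by simp only [Matrix.mul_assoc], hexpY]
        simp only [Matrix.add_mul, Matrix.mul_add, Matrix.smul_mul, Matrix.mul_smul,
          Matrix.one_mul, hQQ]
      have ta : 0 ≤ (Q * ((R * R) * Q)).trace := by
        have hshape : Q * ((R * R) * Q) = (R * Q)ᵀ * (R * Q) := by
          rw [Matrix.transpose_mul, hQt, hRt]
          simp only [Matrix.mul_assoc]
        rw [hshape, trace_transpose_mul_self_eq]
        positivity
      have tb : 0 ≤ (Q * (R * Q)).trace := by
        have h3 := hRpsd.mul_mul_conjTranspose_same Q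
        rw [show Qᴴ = Q by rw [Matrix.conjTranspose_eq_transpose_of_trivial, hQt],
          Matrix.mul_assoc] at h3
        exact psd_trace_nonneg h3
      rw [hcyc, hprod]
      simp only [Matrix.trace_add, Matrix.trace_smul, smul_eq_mul]
      rw [hQtr]
      nlinarith [ta, tb, sq_nonneg σ]
    have hXXtr : (X * X).trace = (S * S).trace - 2 * σ * S.trace + σ ^ 2 * (n : ℝ) := by
      rw [hX]
      simp only [Matrix.sub_mul, Matrix.mul_sub, Matrix.smul_mul, Matrix.mul_smul,
        Matrix.mul_one, Matrix.one_mul, smul_smul, Matrix.trace_sub, Matrix.trace_smul,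
        Matrix.trace_one, smul_eq_mul, Fintype.card_fin]
      ring
    have hrank_cast : (Ω.rank : ℝ) ≤ (r : ℝ) := Nat.cast_le.mpr hΩrank
    have hmono : σ ^ 2 * ((n : ℝ) - (r : ℝ)) ≤ σ ^ 2 * ((n : ℝ) - (Ω.rank : ℝ)) := by
      apply mul_le_mul_of_nonneg_left _ (sq_nonneg σ)
      linarith
    linarith [ha, hb, hXXtr, hmono]
  -- expansions for the final assembly
  have hEE : (Ωh - Ω) * (Ωh - Ω) = (S - σ • P) * (S - σ • P) := by
    have hEeq : Ωh - Ω = -(S - σ • P) := by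
      rw [hS, hR]
      module
    rw [hEeq, Matrix.neg_mul, Matrix.mul_neg, neg_neg]
  have hEEtr : ((Ωh - Ω) * (Ωh - Ω)).trace
      = (S * S).trace - 2 * (σ * (S * P).trace) + σ ^ 2 * (r : ℝ) := by
    have h1 : (S - σ • P) * (S - σ • P)
        = S * S - σ • (S * P) - σ • (P * S) + (σ * σ) • P := by
      simp only [Matrix.sub_mul, Matrix.mul_sub, Matrix.smul_mul, Matrix.mul_smul,
        smul_smul, hPP]
      module
    rw [hEE, h1]
    simp only [Matrix.trace_add, Matrix.trace_sub, Matrix.trace_smul, smul_eq_mul]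
    rw [Matrix.trace_mul_comm P S, hPtr]
    ring
  have hSP : (S * P).trace = (Ω * P).trace - Ωh.trace + σ * (r : ℝ) := by
    have h1 : S * P = Ω * P - Ωh + σ • P := by
      rw [hS, hR, Matrix.sub_mul, Matrix.sub_mul, Matrix.smul_mul, hAP, hPP]
      module
    rw [h1]
    simp only [Matrix.trace_add, Matrix.trace_sub, Matrix.trace_smul, smul_eq_mul, hPtr]
  have hΩ'tr : Ω'.trace = Ω.trace - (Ω * P).trace := by
    have h1 : (1 - P) * Ω * (1 - P) = Ω - P * Ω - Ω * P + P * (Ω * P) := by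
      simp only [Matrix.sub_mul, Matrix.mul_sub, Matrix.one_mul, Matrix.mul_one,
        Matrix.mul_assoc]
      abel
    have h2 : (P * (Ω * P)).trace = (Ω * P).trace := by
      rw [Matrix.trace_mul_comm P (Ω * P), Matrix.mul_assoc, hPP]
    rw [hΩ', h1]
    simp only [Matrix.trace_add, Matrix.trace_sub]
    rw [h2, Matrix.trace_mul_comm P Ω]
    ring
  have hStr : S.trace = Ω.trace - Ωh.trace + σ * (r : ℝ) := by
    rw [hS, hR]
    simp only [Matrix.trace_sub, Matrix.trace_smul, smul_eq_mul, hPtr]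
    ring
  have h2σS : σ * S.trace = σ * Ω.trace - σ * Ωh.trace + σ ^ 2 * (r : ℝ) := by
    rw [hStr]; ring
  have hσΩ' : σ * Ω'.trace = σ * Ω.trace - σ * (Ω * P).trace := by
    rw [hΩ'tr]; ring
  have hσSP : σ * (S * P).trace = σ * (Ω * P).trace - σ * Ωh.trace + σ ^ 2 * (r : ℝ) := by
    rw [hSP]; ring
  linarith [hdagger, hkey1, hEEtr, h2σS, hσΩ', hσSP]

lemma trace_transpose_mul_eq {n : ℕ} (X Y : Matrix (Fin n) (Fin n) ℝ) :
    (Xᵀ * Y).trace = ∑ i, ∑ j, X i j * Y i j := by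
  simp only [Matrix.trace, Matrix.diag, Matrix.mul_apply, Matrix.transpose_apply]
  exact Finset.sum_comm


/-- If `Σ = Ωh + Δ > 0` with `Δ ∈ D_Ωh`, then `Ωh` solves the
reformulated Frisch–Kalman problem. -/
theorem stmt5 {n r : ℕ} (hrn : r < n)
    (Ωh Δ Λ : Matrix (Fin n) (Fin n) ℝ)
    (hΩ : Ωh.PosSemidef) (hrank : Ωh.rank = r)
    (hΔd : Δ.IsDiag) (hΔ0 : ∀ i, 0 ≤ Δ i i)
    (hΛs : Λ.IsSymm) (hΛ0 : ∀ i, Λ i i = 0)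
    (hnorm : opNorm (Δ + Λ) < sv Ωh r) (horth : rangesOrth (Δ + Λ) Ωh)
    (hPD : (Ωh + Δ).PosDef) :
    Ωh.rank ≤ r ∧ Ωh.PosSemidef ∧
    ((Ωh + Δ) - Ωh).PosSemidef ∧ ((Ωh + Δ) - Ωh).IsDiag ∧
    frobNorm ((Ωh + Δ) - Ωh) ^ 2 = frobNorm Δ ^ 2 ∧
    ∀ Ω : Matrix (Fin n) (Fin n) ℝ, Ω.rank ≤ r → Ω.PosSemidef →
      ((Ωh + Δ) - Ω).PosSemidef → ((Ωh + Δ) - Ω).IsDiag →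
      frobNorm ((Ωh + Δ) - Ω) ^ 2 ≥ frobNorm ((Ωh + Δ) - Ωh) ^ 2 := by
  classical
  have hcancel : (Ωh + Δ) - Ωh = Δ := add_sub_cancel_left Ωh Δ
  have hΔsym : Δᵀ = Δ := by
    ext i j
    by_cases h : i = j
    · subst h; rfl
    · rw [Matrix.transpose_apply, hΔd (Ne.symm h), hΔd h]
  have hΔpsd : Δ.PosSemidef := by
    rw [← hΔd.diagonal_diag]
    exact Matrix.posSemidef_diagonal_iff.mpr (fun i => hΔ0 i)
  set M : Matrix (Fin n) (Fin n) ℝ := Δ + Λ with hM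
  have hMsym : Mᵀ = M := by
    rw [hM, Matrix.transpose_add, hΔsym, hΛs.eq]
  have hMΩh : M * Ωh = 0 := by
    have hMt : Mᵀ * Ωh = 0 := by
      ext i j
      have h := horth (Pi.single i 1) (Pi.single j 1)
      simp only [Matrix.mulVec_single, mul_one] at h
      simpa [Matrix.mul_apply, Matrix.transpose_apply, dotProduct] using h
    rwa [hMsym] at hMt
  refine ⟨le_of_eq hrank, hΩ, ?_, ?_, ?_, ?_⟩
  · rw [hcancel]; exact hΔpsd
  · rw [hcancel]; exact hΔd
  · rw [hcancel]
  · intro Ω hΩrank hΩpsd hDpsd hDdiag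
    have hEdiag : (Ωh - Ω).IsDiag := by
      have h : Ωh - Ω = ((Ωh + Δ) - Ω) - Δ := by abel
      rw [h]
      exact hDdiag.sub hΔd
    have hDeq : (Ωh + Δ) - Ω = Δ + (Ωh - Ω) := by abel
    have hnn1 : 0 ≤ ∑ i, ∑ j, (((Ωh + Δ) - Ω) i j) ^ 2 := by positivity
    have hnn2 : 0 ≤ ∑ i, ∑ j, (Δ i j) ^ 2 := by positivity
    have hsq1 : frobNorm ((Ωh + Δ) - Ω) ^ 2 = ∑ i, ∑ j, (((Ωh + Δ) - Ω) i j) ^ 2 :=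
      Real.sq_sqrt hnn1
    have hsq2 : frobNorm ((Ωh + Δ) - Ωh) ^ 2 = ∑ i, ∑ j, (Δ i j) ^ 2 := by
      rw [hcancel]
      exact Real.sq_sqrt hnn2
    have hsplit : ∑ i, ∑ j, (((Ωh + Δ) - Ω) i j) ^ 2
        = (∑ i, ∑ j, (Δ i j) ^ 2) + 2 * (∑ i, ∑ j, Δ i j * (Ωh - Ω) i j)
          + ∑ i, ∑ j, ((Ωh - Ω) i j) ^ 2 := by
      rw [hDeq]
      simp only [Matrix.add_apply, add_sq, Finset.sum_add_distrib, Finset.mul_sum]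
      ring
    have hT : ∑ i, ∑ j, Δ i j * (Ωh - Ω) i j = -(M * Ω).trace := by
      have h1 : ∑ i, ∑ j, Λ i j * (Ωh - Ω) i j = 0 := by
        refine Finset.sum_eq_zero (fun i _ => Finset.sum_eq_zero (fun j _ => ?_))
        by_cases h : i = j
        · subst h; rw [hΛ0 i, zero_mul]
        · rw [hEdiag h, mul_zero]
      have h2 : ∑ i, ∑ j, M i j * (Ωh - Ω) i j
          = (∑ i, ∑ j, Δ i j * (Ωh - Ω) i j) + ∑ i, ∑ j, Λ i j * (Ωh - Ω) i j := by
        simp only [hM, Matrix.add_apply, add_mul, Finset.sum_add_distrib]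
      have h3 : ∑ i, ∑ j, M i j * (Ωh - Ω) i j = (M * (Ωh - Ω)).trace := by
        rw [← trace_transpose_mul_eq M (Ωh - Ω), hMsym]
      have h4 : (M * (Ωh - Ω)).trace = -(M * Ω).trace := by
        rw [Matrix.mul_sub, Matrix.trace_sub, hMΩh, Matrix.trace_zero]
        ring
      rw [h2, h1, add_zero] at h3
      rw [h3, h4]
    have hEt : (Ωh - Ω)ᵀ = Ωh - Ω := by
      rw [Matrix.transpose_sub, psd_transpose_eq hΩ, psd_transpose_eq hΩpsd]
    have hEsq : ∑ i, ∑ j, ((Ωh - Ω) i j) ^ 2 = ((Ωh - Ω) * (Ωh - Ω)).trace := by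
      rw [← trace_transpose_mul_self_eq, hEt]
    have hcentral := central hrn Ωh Ω M hΩ hrank hMsym hMΩh hnorm hΩpsd hΩrank
    rw [ge_iff_le, hsq1, hsq2, hsplit, hT, hEsq]
    linarith
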